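/- The gap function h is nondecreasing on the nonnegative integers: h(x) − h(x−1) ≥ 0 for every integer x ≥ 1, with equality at x = 1. Consequently h(x) ≥ 0 for every integer x ≥ 0. -/

import Mathlib

set_option maxHeartbeats 1000000

/-- The gap function `h` is nondecreasing on the nonnegative integers:
`h(x) − h(x−1) ≥ 0` for every integer `x ≥ 1`, with equality at `x = 1`; consequently
`h(x) ≥ 0` for every integer `x ≥ 0`. -/
theorem gap_function_nondecreasing_and_nonneg
    (η β γ δ A B E F : ℝ)
    (hη : 0 < η) (hβ : 0 < β) (hγ0 : 0 < γ) (hγ1 : γ < 1) (hδ : 0 ≤ δ)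
    (hA : γ * A ^ 2 - (1 + γ + η * β) * A + 1 = 0)
    (hB : γ * B ^ 2 - (1 + γ + η * β) * B + 1 = 0)
    (hBA : B < A)
    (hE : E = A / ((A - B) * (γ * A - 1)))
    (hF : F = B / ((A - B) * (1 - γ * B)))
    (h : ℕ → ℝ)
    (hh : ∀ x : ℕ, h x = η * δ *
      (E * (γ * A) ^ x + F * (γ * B) ^ x - 1 / (η * β) -
        (γ * (γ ^ x - 1) - (γ - 1) * (x : ℝ)) / (γ - 1) ^ 2)) :
    (∀ x : ℕ, 1 ≤ x → 0 ≤ h x - h (x - 1)) ∧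
    h 1 - h 0 = 0 ∧
    (∀ x : ℕ, 0 ≤ h x) := by
  have hABpos : 0 < A - B := sub_pos.mpr hBA
  have hABne : A - B ≠ 0 := ne_of_gt hABpos
  have hηβ : 0 < η * β := mul_pos hη hβ
  have hηβne : η * β ≠ 0 := ne_of_gt hηβ
  have hγ1ne : γ - 1 ≠ 0 := by intro hc; nlinarith [sub_eq_zero.mp hc]
  have h1γpos : 0 < 1 - γ := by linarith
  have h1γne : 1 - γ ≠ 0 := ne_of_gt h1γpos
  have hsum : γ * (A + B) = 1 + γ + η * β := by
    have h1 : (A - B) * (γ * (A + B) - (1 + γ + η * β)) = 0 := by linear_combination hA - hB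
    rcases mul_eq_zero.mp h1 with h2 | h2
    · exact absurd h2 hABne
    · linarith
  have hprod : γ * (A * B) = 1 := by linear_combination A * hsum - hA
  have hab : 0 < A * B := by nlinarith [hprod, hγ0]
  have hsumpos : 0 < A + B := by nlinarith [hsum, hγ0, hηβ]
  have hBpos : 0 < B := by nlinarith [hab, hsumpos, hBA]
  have hApos : 0 < A := lt_trans hBpos hBA
  have hkey : (γ * A - 1) * (1 - γ * B) = η * β := by linear_combination hsum - γ * hprod
  have hvu : γ * B < γ * A := by nlinarith
  have hu1 : 1 < γ * A := by nlinarith [hkey, hηβ, hvu]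
  have hv1 : γ * B < 1 := by nlinarith [hkey, hηβ, hu1]
  have hv0 : 0 < γ * B := mul_pos hγ0 hBpos
  have hune : γ * A - 1 ≠ 0 := ne_of_gt (by linarith)
  have hvne : 1 - γ * B ≠ 0 := ne_of_gt (by linarith)
  -- h 0 = 0
  have hEF : E + F = 1 / (η * β) := by
    rw [hE, hF, div_add_div _ _ (mul_ne_zero hABne hune) (mul_ne_zero hABne hvne),
      div_eq_div_iff (mul_ne_zero (mul_ne_zero hABne hune) (mul_ne_zero hABne hvne)) hηβne]
    linear_combination (-(A - B) ^ 2) * hkey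
  have hzero : h 0 = 0 := by
    have e : h 0 = η * δ * (E + F - 1 / (η * β) -
        (γ * (γ ^ (0 : ℕ) - 1) - (γ - 1) * ((0 : ℕ) : ℝ)) / (γ - 1) ^ 2) := by
      rw [hh 0]; ring
    rw [e, hEF]
    norm_num
  -- closed form for the difference
  have hD : ∀ x : ℕ, h (x + 1) - h x = η * δ *
      (((A * (γ * A) ^ x - B * (γ * B) ^ x) * (1 - γ) - (1 - γ * γ ^ x) * (A - B)) /
        ((A - B) * (1 - γ))) := by
    intro x
    rw [hh (x + 1), hh x, hE, hF]
    push_cast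
    have h1 : (γ * A - 1) * (γ * A - 1)⁻¹ = 1 := mul_inv_cancel₀ hune
    have h2 : (1 - γ * B) * (1 - γ * B)⁻¹ = 1 := mul_inv_cancel₀ hvne
    field_simp
    linear_combination (δ * η * A * A ^ x * γ ^ x * β * (1-γ)^3) * h1 - (δ * η * γ ^ x * B * B ^ x * β * (1-γ)^3) * h2
  -- auxiliary sequence m is nonnegative
  have hmpos : ∀ x : ℕ,
      0 ≤ A * (γ * A) ^ x * (γ * A - 1) - B * (γ * B) ^ x * (γ * B - 1) - γ ^ (x + 1) * (A - B) := by
    intro x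
    induction x with
    | zero =>
      have e : A * (γ * A) ^ 0 * (γ * A - 1) - B * (γ * B) ^ 0 * (γ * B - 1) - γ ^ (0 + 1) * (A - B)
          = η * β * (A - B) := by linear_combination hA - hB
      rw [e]; positivity
    | succ k ih =>
      have hrec : A * (γ * A) ^ (k + 1) * (γ * A - 1) - B * (γ * B) ^ (k + 1) * (γ * B - 1)
            - γ ^ (k + 1 + 1) * (A - B)
          = γ * (A * (γ * A) ^ k * (γ * A - 1) - B * (γ * B) ^ k * (γ * B - 1)
            - γ ^ (k + 1) * (A - B))
            + η * β * (A * (γ * A) ^ (k + 1) - B * (γ * B) ^ (k + 1)) := by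
        linear_combination (γ * A * (γ * A) ^ k) * hA - (γ * B * (γ * B) ^ k) * hB
      rw [hrec]
      have hle : B * (γ * B) ^ (k + 1) ≤ A * (γ * A) ^ (k + 1) :=
        mul_le_mul hBA.le (pow_le_pow_left₀ hv0.le hvu.le _) (pow_nonneg hv0.le _) hApos.le
      have h1 : 0 ≤ γ * (A * (γ * A) ^ k * (γ * A - 1) - B * (γ * B) ^ k * (γ * B - 1)
          - γ ^ (k + 1) * (A - B)) := mul_nonneg hγ0.le ih
      nlinarith [mul_le_mul_of_nonneg_left hle hηβ.le]
  -- auxiliary sequence n is nonnegative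
  have hnpos : ∀ x : ℕ,
      0 ≤ (A * (γ * A) ^ x - B * (γ * B) ^ x) * (1 - γ) - (1 - γ * γ ^ x) * (A - B) := by
    intro x
    induction x with
    | zero => exact ge_of_eq (by ring)
    | succ k ih =>
      have e : (A * (γ * A) ^ (k + 1) - B * (γ * B) ^ (k + 1)) * (1 - γ)
            - (1 - γ * γ ^ (k + 1)) * (A - B)
          = ((A * (γ * A) ^ k - B * (γ * B) ^ k) * (1 - γ) - (1 - γ * γ ^ k) * (A - B))
            + (1 - γ) * (A * (γ * A) ^ k * (γ * A - 1) - B * (γ * B) ^ k * (γ * B - 1)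
              - γ ^ (k + 1) * (A - B)) := by ring
      rw [e]
      have := mul_nonneg h1γpos.le (hmpos k)
      linarith
  -- differences are nonnegative
  have hDpos : ∀ x : ℕ, 0 ≤ h (x + 1) - h x := by
    intro x
    rw [hD x]
    have : 0 ≤ ((A * (γ * A) ^ x - B * (γ * B) ^ x) * (1 - γ) - (1 - γ * γ ^ x) * (A - B)) /
        ((A - B) * (1 - γ)) := div_nonneg (hnpos x) (by positivity)
    exact mul_nonneg (mul_nonneg hη.le hδ) this
  refine ⟨?_, ?_, ?_⟩
  · intro x hx
    obtain ⟨n, rfl⟩ : ∃ n, x = n + 1 := ⟨x - 1, (Nat.succ_pred_eq_of_pos hx).symm⟩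
    simpa using hDpos n
  · have e := hD 0
    have e2 : (A * (γ * A) ^ 0 - B * (γ * B) ^ 0) * (1 - γ) - (1 - γ * γ ^ 0) * (A - B) = 0 := by
      ring
    rw [e2] at e
    simpa using e
  · intro x
    induction x with
    | zero => rw [hzero]
    | succ k ih => linarith [hDpos k]
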